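/- For every x ≥ 0, e^{x²}·(1 + erf(x)) = ∑_{k=1}^∞ x^{k-1} / Γ((k+1)/2), where erf denotes the Gauss error function and Γ the Gamma function. -/

import Mathlib

open MeasureTheory Real

open scoped Nat

lemma gamma_half_lower (m : ℕ) : (m ! : ℝ) / 2 ^ m ≤ Real.Gamma (m + 1/2) := by
  induction m with
  | zero =>
    simp only [Nat.cast_zero, zero_add, Nat.factorial_zero, Nat.cast_one, pow_zero, div_one,
      Real.Gamma_one_half_eq]
    nlinarith [Real.sq_sqrt Real.pi_pos.le, Real.sqrt_nonneg π, Real.pi_gt_three]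
  | succ m ih =>
    have h : ((m+1 : ℕ) : ℝ) + 1/2 = ((m:ℝ) + 1/2) + 1 := by push_cast; ring
    rw [h, Real.Gamma_add_one (by positivity)]
    have hfac : ((m+1)! : ℝ) = (m+1) * m ! := by push_cast [Nat.factorial_succ]; ring
    have hm : (0:ℝ) ≤ (m ! : ℝ) / 2 ^ m := by positivity
    calc ((m+1)! : ℝ) / 2 ^ (m+1) = ((m:ℝ)+1)/2 * ((m ! : ℝ) / 2 ^ m) := by
          rw [hfac]; ring
      _ ≤ ((m:ℝ)+1/2) * ((m ! : ℝ) / 2 ^ m) := by nlinarith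
      _ ≤ ((m:ℝ)+1/2) * Real.Gamma ((m:ℝ)+1/2) := by nlinarith [Real.Gamma_pos_of_pos (show (0:ℝ) < m+1/2 by positivity)]

lemma gb2 (n : ℕ) : ((n/2)! : ℝ) / 2 ^ (n/2+1) ≤ Real.Gamma (((n:ℝ) + 2)/2) := by
  obtain ⟨m, rfl | rfl⟩ := Nat.even_or_odd' n
  · have h1 : (2*m) / 2 = m := by omega
    have h2 : (((2*m : ℕ):ℝ) + 2)/2 = (m : ℝ) + 1 := by push_cast; ring
    rw [h1, h2, Real.Gamma_nat_eq_factorial]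
    have : (0:ℝ) < 2 ^ (m+1) := by positivity
    rw [div_le_iff₀ this]
    have h3 : (1:ℝ) ≤ 2 ^ (m+1) := by
      calc (1:ℝ) = 1 ^ (m+1) := (one_pow _).symm
      _ ≤ 2 ^ (m+1) := by gcongr; norm_num
    nlinarith [(Nat.cast_pos (α := ℝ)).2 m.factorial_pos]
  · have h1 : (2*m+1) / 2 = m := by omega
    have h2 : (((2*m+1 : ℕ):ℝ) + 2)/2 = ((m : ℝ) + 1/2) + 1 := by push_cast; ring
    rw [h1, h2, Real.Gamma_add_one (by positivity)]
    have hg := gamma_half_lower m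
    have hgpos := Real.Gamma_pos_of_pos (show (0:ℝ) < (m:ℝ)+1/2 by positivity)
    have : ((m)! : ℝ) / 2 ^ (m+1) = (1/2) * ((m ! : ℝ) / 2 ^ m) := by ring
    rw [this]
    nlinarith [hg, hgpos]

lemma gb1 (n : ℕ) : ((n/2)! : ℝ) / 2 ^ (n/2+1) ≤ Real.Gamma (((n:ℝ) + 1)/2) := by
  obtain ⟨m, rfl | rfl⟩ := Nat.even_or_odd' n
  · have h1 : (2*m) / 2 = m := by omega
    have h2 : (((2*m : ℕ):ℝ) + 1)/2 = (m : ℝ) + 1/2 := by push_cast; ring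
    rw [h1, h2]
    refine le_trans ?_ (gamma_half_lower m)
    have : (0:ℝ) < (m ! : ℝ) := Nat.cast_pos.2 m.factorial_pos
    apply div_le_div_of_nonneg_left this.le (by positivity)
    exact pow_le_pow_right₀ (by norm_num) (by omega)
  · have h1 : (2*m+1) / 2 = m := by omega
    have h2 : (((2*m+1 : ℕ):ℝ) + 1)/2 = (m : ℝ) + 1 := by push_cast; ring
    rw [h1, h2, Real.Gamma_nat_eq_factorial]
    have : (0:ℝ) < 2 ^ (m+1) := by positivity
    rw [div_le_iff₀ this]
    have h3 : (1:ℝ) ≤ 2 ^ (m+1) := by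
      calc (1:ℝ) = 1 ^ (m+1) := (one_pow _).symm
      _ ≤ 2 ^ (m+1) := by gcongr; norm_num
    nlinarith [(Nat.cast_pos (α := ℝ)).2 m.factorial_pos]

lemma summable_aux (x : ℝ) : Summable (fun n : ℕ => 2 ^ (n/2+1) * |x| ^ n / (n/2)!) := by
  set f : ℕ → ℝ := fun n => 2 ^ (n/2+1) * |x| ^ n / (n/2)! with hf
  have he : Summable (fun k => f (2*k)) := by
    have hfe : (fun k => f (2*k)) = fun k => 2 * ((2*x^2) ^ k / k !) := by
      funext k
      have h1 : (2*k)/2 = k := by omega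
      have h2 : |x| ^ (2*k) = (x^2)^k := by rw [pow_mul, sq_abs]
      simp only [hf, h1, h2, mul_pow, pow_succ]
      ring
    rw [hfe]
    exact (Real.summable_pow_div_factorial (2*x^2)).mul_left 2
  have ho : Summable (fun k => f (2*k+1)) := by
    have hfo : (fun k => f (2*k+1)) = fun k => (2*|x|) * ((2*x^2) ^ k / k !) := by
      funext k
      have h1 : (2*k+1)/2 = k := by omega
      have h2 : |x| ^ (2*k+1) = (x^2)^k * |x| := by rw [pow_succ, pow_mul, sq_abs]
      simp only [hf, h1, h2, mul_pow, pow_succ]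
      ring
    rw [hfo]
    exact (Real.summable_pow_div_factorial (2*x^2)).mul_left (2*|x|)
  exact (he.hasSum.even_add_odd ho.hasSum).summable

lemma summable2 (x : ℝ) : Summable (fun n : ℕ => x ^ n / Real.Gamma (((n:ℝ) + 2)/2)) := by
  apply Summable.of_norm_bounded (summable_aux x)
  intro n
  have hg := gb2 n
  have hgpos : 0 < Real.Gamma (((n:ℝ)+2)/2) := Real.Gamma_pos_of_pos (by positivity)
  have hfl : (0:ℝ) < ((n/2)! : ℝ) / 2 ^ (n/2+1) := by positivity
  rw [Real.norm_eq_abs, abs_div, abs_pow, abs_of_pos hgpos]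
  calc |x|^n / Real.Gamma (((n:ℝ)+2)/2) ≤ |x|^n / (((n/2)! : ℝ)/2^(n/2+1)) := by
        gcongr
    _ = 2 ^ (n/2+1) * |x| ^ n / (n/2)! := by
        field_simp

lemma summable1 (x : ℝ) : Summable (fun n : ℕ => x ^ n / Real.Gamma (((n:ℝ) + 1)/2)) := by
  apply Summable.of_norm_bounded (summable_aux x)
  intro n
  have hg := gb1 n
  have hgpos : 0 < Real.Gamma (((n:ℝ)+1)/2) := Real.Gamma_pos_of_pos (by positivity)
  have hfl : (0:ℝ) < ((n/2)! : ℝ) / 2 ^ (n/2+1) := by positivity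
  rw [Real.norm_eq_abs, abs_div, abs_pow, abs_of_pos hgpos]
  calc |x|^n / Real.Gamma (((n:ℝ)+1)/2) ≤ |x|^n / (((n/2)! : ℝ)/2^(n/2+1)) := by
        gcongr
    _ = 2 ^ (n/2+1) * |x| ^ n / (n/2)! := by
        field_simp

lemma ratio (k : ℕ) : ((k:ℝ)+1) / Real.Gamma (((k:ℝ)+3)/2) = 2 / Real.Gamma (((k:ℝ)+1)/2) := by
  have h : ((k:ℝ)+3)/2 = ((k:ℝ)+1)/2 + 1 := by ring
  rw [h, Real.Gamma_add_one (by positivity)]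
  have hp := Real.Gamma_pos_of_pos (show (0:ℝ) < ((k:ℝ)+1)/2 by positivity)
  rw [div_eq_div_iff (by positivity) hp.ne']
  ring

lemma summable3 (R : ℝ) :
    Summable (fun n : ℕ => (n:ℝ) * R ^ (n-1) / Real.Gamma (((n:ℝ)+2)/2)) := by
  have he : ∀ n : ℕ, ((n+1:ℕ):ℝ) * R ^ ((n+1)-1) / Real.Gamma ((((n+1:ℕ):ℝ)+2)/2)
      = 2 * (R ^ n / Real.Gamma (((n:ℝ)+1)/2)) := by
    intro n
    have harg : ((((n+1:ℕ)):ℝ)+2)/2 = ((n:ℝ)+3)/2 := by push_cast; ring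
    have hstep : ((n+1:ℕ):ℝ) * R ^ ((n+1)-1) / Real.Gamma (((n:ℝ)+3)/2)
        = (((n:ℝ)+1)/Real.Gamma (((n:ℝ)+3)/2)) * R ^ n := by
      push_cast; ring
    rw [harg, hstep, ratio n]
    ring
  rw [← summable_nat_add_iff 1]
  apply Summable.congr (((summable1 R).mul_left 2))
  intro n
  exact (he n).symm

lemma hasDerivAt_F (y : ℝ) :
    HasDerivAt (fun z : ℝ => ∑' n : ℕ, z ^ n / Real.Gamma (((n:ℝ) + 2)/2))
      (∑' n : ℕ, (n:ℝ) * y ^ (n-1) / Real.Gamma (((n:ℝ) + 2)/2)) y := by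
  set R := |y| + 1 with hR
  have hRpos : 0 < R := by positivity
  refine hasDerivAt_tsum_of_isPreconnected
    (u := fun n : ℕ => (n:ℝ) * R ^ (n-1) / Real.Gamma (((n:ℝ)+2)/2))
    (t := Metric.ball (0:ℝ) R) (y₀ := 0)
    (g := fun (n : ℕ) (z : ℝ) => z ^ n / Real.Gamma (((n:ℝ)+2)/2))
    (g' := fun (n : ℕ) (z : ℝ) => (n:ℝ) * z ^ (n-1) / Real.Gamma (((n:ℝ)+2)/2))
    (summable3 R) Metric.isOpen_ball (convex_ball (0:ℝ) R).isPreconnected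
    (fun n z _ => (hasDerivAt_pow n z).div_const _) ?_ (Metric.mem_ball_self hRpos)
    (summable2 0) ?_
  · intro n z hz
    have hgpos : 0 < Real.Gamma (((n:ℝ)+2)/2) := Real.Gamma_pos_of_pos (by positivity)
    have hzR : |z| ≤ R := (mem_ball_zero_iff.mp hz).le
    rw [Real.norm_eq_abs, abs_div, abs_mul, abs_pow, Nat.abs_cast, abs_of_pos hgpos,
      div_le_div_iff_of_pos_right hgpos]
    exact mul_le_mul_of_nonneg_left (pow_le_pow_left₀ (abs_nonneg z) hzR _) (Nat.cast_nonneg n)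
  · rw [mem_ball_zero_iff, Real.norm_eq_abs, hR]
    linarith

lemma deriv_series_eq (y : ℝ) :
    (∑' n : ℕ, (n:ℝ) * y ^ (n-1) / Real.Gamma (((n:ℝ) + 2)/2))
      = 2 * ((Real.sqrt π)⁻¹ + y * ∑' n : ℕ, y ^ n / Real.Gamma (((n:ℝ) + 2)/2)) := by
  rw [Summable.tsum_eq_zero_add (summable3 y)]
  have hterm : ∀ n : ℕ, ((n+1:ℕ):ℝ) * y ^ ((n+1)-1) / Real.Gamma ((((n+1:ℕ):ℝ)+2)/2)
      = 2 * (y ^ n / Real.Gamma (((n:ℝ)+1)/2)) := by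
    intro n
    have harg : ((((n+1:ℕ)):ℝ)+2)/2 = ((n:ℝ)+3)/2 := by push_cast; ring
    have hstep : ((n+1:ℕ):ℝ) * y ^ ((n+1)-1) / Real.Gamma (((n:ℝ)+3)/2)
        = (((n:ℝ)+1)/Real.Gamma (((n:ℝ)+3)/2)) * y ^ n := by
      push_cast; ring
    rw [harg, hstep, ratio n]
    ring
  rw [tsum_congr hterm, tsum_mul_left, Summable.tsum_eq_zero_add (summable1 y)]
  have hterm2 : ∀ n : ℕ, y ^ (n+1) / Real.Gamma ((((n+1:ℕ):ℝ)+1)/2)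
      = y * (y ^ n / Real.Gamma (((n:ℝ)+2)/2)) := by
    intro n
    have harg : ((((n+1:ℕ)):ℝ)+1)/2 = ((n:ℝ)+2)/2 := by push_cast; ring
    rw [harg, pow_succ]
    ring
  have hterm2' : ∀ n : ℕ, y ^ (n+1) / Real.Gamma ((((n:ℕ):ℝ)+1+1)/2)
      = y * (y ^ n / Real.Gamma (((n:ℝ)+2)/2)) := by
    intro n
    have harg : (((n:ℕ):ℝ)+1+1)/2 = ((n:ℝ)+2)/2 := by push_cast; ring
    rw [harg, pow_succ]
    ring
  rw [tsum_congr hterm2, tsum_mul_left]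
  simp only [Nat.cast_zero, CharP.cast_eq_zero, pow_zero, zero_add, Nat.cast_ofNat]
  rw [Real.Gamma_one_half_eq, one_div]
  norm_num

/-- The Gauss error function. -/
noncomputable def erf (x : ℝ) : ℝ :=
  (2 / Real.sqrt π) * ∫ t in (0:ℝ)..x, Real.exp (-t ^ 2)

lemma hasDerivAt_erf (y : ℝ) :
    HasDerivAt erf (2 / Real.sqrt π * Real.exp (-y ^ 2)) y := by
  have hc : Continuous fun t : ℝ => Real.exp (-t ^ 2) := by continuity
  have h1 : HasDerivAt (fun z : ℝ => ∫ t in (0:ℝ)..z, Real.exp (-t ^ 2))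
      (Real.exp (-y ^ 2)) y :=
    intervalIntegral.integral_hasDerivAt_right (hc.intervalIntegrable _ _)
      (hc.stronglyMeasurableAtFilter _ _) hc.continuousAt
  exact h1.const_mul _


/-- `e^{x²}(1 + erf x) = ∑_{k=1}^∞ x^{k-1}/Γ((k+1)/2)`. -/
theorem stmt_1 (x : ℝ) (hx : 0 ≤ x) :
    Real.exp (x ^ 2) * (1 + erf x)
      = ∑' k : ℕ, x ^ k / Real.Gamma (((k : ℝ) + 2) / 2) := by
  have hsqrt : (0:ℝ) < Real.sqrt π := Real.sqrt_pos.mpr Real.pi_pos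
  set F : ℝ → ℝ := fun z => ∑' n : ℕ, z ^ n / Real.Gamma (((n:ℝ) + 2)/2) with hF
  set G : ℝ → ℝ := fun z => Real.exp (-z ^ 2) * F z - erf z with hG
  have hGd : ∀ y : ℝ, HasDerivAt G 0 y := by
    intro y
    have h1 : HasDerivAt (fun z : ℝ => -z ^ 2) (-(2 * y)) y := by
      simpa using (hasDerivAt_pow 2 y).fun_neg
    have h2 := h1.exp
    have h3 := h2.mul (hasDerivAt_F y)
    have h4 := h3.sub (hasDerivAt_erf y)
    have hval : Real.exp (-y ^ 2) * -(2 * y) * F y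
        + Real.exp (-y ^ 2) * (∑' n : ℕ, (n:ℝ) * y ^ (n-1) / Real.Gamma (((n:ℝ) + 2)/2))
        - 2 / Real.sqrt π * Real.exp (-y ^ 2) = 0 := by
      rw [deriv_series_eq y]
      field_simp
      ring
    rw [hval] at h4
    exact h4
  have hconst : G x = G 0 :=
    is_const_of_deriv_eq_zero (fun y => (hGd y).differentiableAt)
      (fun y => (hGd y).deriv) x 0
  have hF0 : F 0 = 1 := by
    show (∑' n : ℕ, (0:ℝ) ^ n / Real.Gamma (((n:ℝ) + 2)/2)) = 1
    rw [tsum_eq_single 0 (fun n hn => by rw [zero_pow hn, zero_div])]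
    norm_num [Real.Gamma_one]
  have herf0 : erf 0 = 0 := by
    simp [erf]
  have hG0 : G 0 = 1 := by
    simp [hG, hF0, herf0]
  rw [hG0] at hconst
  have hx2 : Real.exp (x ^ 2) * Real.exp (-x ^ 2) = 1 := by
    rw [← Real.exp_add]; simp
  have hGx : Real.exp (-x ^ 2) * F x - erf x = 1 := hconst
  linear_combination (-Real.exp (x ^ 2)) * hGx + (F x) * hx2
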